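/- If a total learner h' Psd-Mon-Ex-learns a language L, and σ is a finite sequence of elements of L such that x, y ∈ W_{h'(content(σ), |σ|)} for elements x, y, and both L ∪ {x} and L ∪ {y} (suitably completed) are also learned by h' with σ extendable to texts of them, then for every finite sequence τ of elements of L, {x, y} ⊆ W_{h'(content(σ τ), |σ τ|)}; consequently, if x ∉ L or y ∉ L, then h' never outputs a correct index for L on any extension of σ by elements of L, so h' fails to Ex-learn L. -/

import Mathlib

/-- The `e`-th computably enumerable set: the domain of the `e`-th partial
computable function in the standard numbering of `Nat.Partrec.Code`. -/
def Wset (e : ℕ) : Set ℕ := {x | ((Denumerable.ofNat Nat.Partrec.Code e).eval x).Dom}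

/-- A text: a function from ℕ to ℕ ∪ {#}, with `none` playing the role of the pause symbol #. -/
def Text := ℕ → Option ℕ

/-- The content of a text: its range without the pause symbol. -/
def content (T : Text) : Set ℕ := {x | ∃ n, T n = some x}

/-- The initial segment `T[n]` of a text, as a finite sequence over ℕ ∪ {#}. -/
def seg (T : Text) (n : ℕ) : List (Option ℕ) := (List.range n).map T

/-- The content of a finite sequence over ℕ ∪ {#}. -/
def contentSeg (l : List (Option ℕ)) : Set ℕ := {x | (some x) ∈ l}

/-- The content of `T[n]` as a finite set. -/
def fset (T : Text) (n : ℕ) : Finset ℕ := ((List.range n).map T).reduceOption.toFinset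

/-- A total partially set-driven learner is monotone (w.r.t. the target) on every text of `L`. -/
def PsdMonOn (h' : Finset ℕ × ℕ → ℕ) (L : Set ℕ) : Prop :=
  ∀ T : Text, content T = L → ∀ i j : ℕ, i ≤ j →
    Wset (h' (fset T i, i)) ∩ L ⊆ Wset (h' (fset T j, j)) ∩ L

/-- A total partially set-driven learner Ex-learns `L` on the text `T`. -/
def PsdExOn (h' : Finset ℕ × ℕ → ℕ) (T : Text) (L : Set ℕ) : Prop :=
  ∃ e : ℕ, Wset e = L ∧ ∃ n₀ : ℕ, ∀ n ≥ n₀, h' (fset T n, n) = e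

lemma retention_aux (h' : Finset ℕ × ℕ → ℕ) (L' : Set ℕ) (z : ℕ)
    (hMon : PsdMonOn h' L') (hz : z ∈ L')
    (ρ₁ ρ₂ : List (Option ℕ)) (hρ : ∀ a : ℕ, some a ∈ ρ₁ ++ ρ₂ → a ∈ L')
    (hzW : z ∈ Wset (h' (ρ₁.reduceOption.toFinset, ρ₁.length))) :
    z ∈ Wset (h' ((ρ₁ ++ ρ₂).reduceOption.toFinset, (ρ₁ ++ ρ₂).length)) := by
  classical
  set ρ : List (Option ℕ) := ρ₁ ++ ρ₂ with hρdef
  set T : Text := fun k => if hk : k < ρ.length then ρ[k]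
    else if (k - ρ.length) ∈ L' then some (k - ρ.length) else none with hT
  have hseg : ∀ m ≤ ρ.length, seg T m = ρ.take m := by
    intro m hm
    apply List.ext_getElem
    · simp [seg, hm, List.length_map (f := T)]
    intro i h1 h2
    have h1' : i < m := by simpa [seg, List.length_map (f := T)] using h1
    have hi : i < ρ.length := lt_of_lt_of_le h1' hm
    simp only [seg, List.getElem_map, List.getElem_range, List.getElem_take, hT]
    rw [dif_pos hi]
  have hcont : content T = L' := by
    ext a
    constructor
    · rintro ⟨n, hn⟩
      simp only [hT] at hn
      split_ifs at hn with h h2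
      · exact hρ a (hn ▸ List.getElem_mem h)
      · cases hn; exact h2
    · intro ha
      refine ⟨ρ.length + a, ?_⟩
      show (if hk : ρ.length + a < ρ.length then ρ[ρ.length + a] else
        if (ρ.length + a) - ρ.length ∈ L' then some ((ρ.length + a) - ρ.length) else none) = some a
      rw [dif_neg (by omega)]
      simp [ha]
  have key := hMon T hcont ρ₁.length ρ.length (by simp [hρdef])
  have hf1 : fset T ρ₁.length = ρ₁.reduceOption.toFinset := by
    have := hseg ρ₁.length (by simp [hρdef])
    simp only [fset]
    rw [show (List.range ρ₁.length).map T = seg T ρ₁.length from rfl, this,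
      hρdef, List.take_left]
  have hf2 : fset T ρ.length = ρ.reduceOption.toFinset := by
    have := hseg ρ.length le_rfl
    simp only [fset]
    rw [show (List.range ρ.length).map T = seg T ρ.length from rfl, this, List.take_length]
  rw [hf1, hf2] at key
  exact (key ⟨hzW, hz⟩).1

/-- if a total Psd-learner h' monotonically learns languages L₁ ⊇ L ∪ {x}
and L₂ ⊇ L ∪ {y}, and σ is a finite sequence over L with x, y ∈ W_{h'(content σ, |σ|)},
then x and y are retained in all hypotheses on extensions of σ by elements of L; hence if
x ∉ L or y ∉ L, no such hypothesis is correct for L and h' fails to Ex-learn L from any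
text of L beginning with σ. -/
theorem mon_retention_lemma (h' : Finset ℕ × ℕ → ℕ) (L L₁ L₂ : Set ℕ) (x y : ℕ)
    (hL₁ : L ∪ {x} ⊆ L₁) (hL₂ : L ∪ {y} ⊆ L₂)
    (hMonL : PsdMonOn h' L) (hMon₁ : PsdMonOn h' L₁) (hMon₂ : PsdMonOn h' L₂)
    (σ : List ℕ) (hσ : ∀ a ∈ σ, a ∈ L)
    (hx : x ∈ Wset (h' (σ.toFinset, σ.length)))
    (hy : y ∈ Wset (h' (σ.toFinset, σ.length))) :
    (∀ τ : List ℕ, (∀ a ∈ τ, a ∈ L) →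
      x ∈ Wset (h' ((σ ++ τ).toFinset, (σ ++ τ).length)) ∧
      y ∈ Wset (h' ((σ ++ τ).toFinset, (σ ++ τ).length))) ∧
    ((x ∉ L ∨ y ∉ L) →
      (∀ τ : List ℕ, (∀ a ∈ τ, a ∈ L) →
        Wset (h' ((σ ++ τ).toFinset, (σ ++ τ).length)) ≠ L) ∧
      (∀ T : Text, content T = L → seg T σ.length = σ.map some →
        ¬ PsdExOn h' T L)) := by
  have hLL₁ : L ⊆ L₁ := fun a ha => hL₁ (Or.inl ha)
  have hLL₂ : L ⊆ L₂ := fun a ha => hL₂ (Or.inl ha)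
  have hxL₁ : x ∈ L₁ := hL₁ (Or.inr rfl)
  have hyL₂ : y ∈ L₂ := hL₂ (Or.inr rfl)
  have hmapσ : (σ.map some).reduceOption = σ := by
    induction σ with
    | nil => rfl
    | cons a l ih => simp_all [List.reduceOption]
  -- general retention along lists of options extending σ
  have main : ∀ ρ₂ : List (Option ℕ), (∀ a : ℕ, some a ∈ ρ₂ → a ∈ L) →
      x ∈ Wset (h' ((σ.map some ++ ρ₂).reduceOption.toFinset, (σ.map some ++ ρ₂).length)) ∧
      y ∈ Wset (h' ((σ.map some ++ ρ₂).reduceOption.toFinset, (σ.map some ++ ρ₂).length)) := by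
    intro ρ₂ hρ₂
    constructor
    · refine retention_aux h' L₁ x hMon₁ hxL₁ (σ.map some) ρ₂ ?_ ?_
      · intro a ha
        rcases List.mem_append.mp ha with h | h
        · exact hLL₁ (hσ a (by simpa using h))
        · exact hLL₁ (hρ₂ a h)
      · simpa [hmapσ] using hx
    · refine retention_aux h' L₂ y hMon₂ hyL₂ (σ.map some) ρ₂ ?_ ?_
      · intro a ha
        rcases List.mem_append.mp ha with h | h
        · exact hLL₂ (hσ a (by simpa using h))
        · exact hLL₂ (hρ₂ a h)
      · simpa [hmapσ] using hy
  have part1 : ∀ τ : List ℕ, (∀ a ∈ τ, a ∈ L) →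
      x ∈ Wset (h' ((σ ++ τ).toFinset, (σ ++ τ).length)) ∧
      y ∈ Wset (h' ((σ ++ τ).toFinset, (σ ++ τ).length)) := by
    intro τ hτ
    have := main (τ.map some) (by intro a ha; exact hτ a (by simpa using ha))
    have hmapτ : (τ.map some).reduceOption = τ := by
      induction τ with
      | nil => rfl
      | cons a l ih => simp_all [List.reduceOption]
    simpa [← List.map_append, hmapσ, hmapτ,
      show ((σ ++ τ).map some).reduceOption = σ ++ τ by
        induction (σ ++ τ) with
        | nil => rfl
        | cons a l ih => simp_all [List.reduceOption]] using this
  refine ⟨part1, fun hxy => ⟨?_, ?_⟩⟩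
  · intro τ hτ hEq
    obtain ⟨hxW, hyW⟩ := part1 τ hτ
    rcases hxy with h | h
    · exact h (hEq ▸ hxW)
    · exact h (hEq ▸ hyW)
  · rintro T hcT hsegT ⟨e, hWe, n₀, hn₀⟩
    set n : ℕ := max n₀ σ.length with hn
    have hne := hn₀ n (le_max_left _ _)
    -- decompose seg T n
    have hlen : σ.length ≤ n := le_max_right _ _
    have htake : (seg T n).take σ.length = seg T σ.length := by
      simp only [seg, ← List.map_take (f := T), List.take_range, min_eq_left hlen]
    have hdecomp : seg T n = σ.map some ++ (seg T n).drop σ.length := by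
      conv_lhs => rw [← List.take_append_drop σ.length (seg T n)]
      rw [htake, hsegT]
    have hmem : ∀ a : ℕ, some a ∈ (seg T n).drop σ.length → a ∈ L := by
      intro a ha
      have : some a ∈ seg T n := List.mem_of_mem_drop ha
      simp only [seg, List.mem_map (f := T)] at this
      obtain ⟨k, -, hk⟩ := this
      rw [← hcT]; exact ⟨k, hk⟩
    have hml := main ((seg T n).drop σ.length) hmem
    rw [← hdecomp] at hml
    have hlenseg : (seg T n).length = n := by simp [seg, List.length_map (f := T)]
    have hfset : (seg T n).reduceOption.toFinset = fset T n := rfl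
    rw [hlenseg, hfset, hne, hWe] at hml
    rcases hxy with h | h
    · exact h hml.1
    · exact h hml.2
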